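/- Let n ∈ ℕ, let p, q be real parameters with q > −1, and let δ, ε, τ ∈ ℂ with Re(δ) > 0 and Re(τ+ε) > 0. Then for x > 0, the left-sided Erdélyi–Kober fractional integral satisfies (I⁺_{ε,δ} t^{τ−1} M_n^{(p,q)}(t))(x) = (−1)^n Γ(1+q+n) Γ(τ+ε) / [Γ(1+q) Γ(τ+δ+ε)] · x^{τ−1} · ₃F₂(1+n−p, −n, τ+ε; 1+q, τ+δ+ε; −x). -/

import Mathlib

open MeasureTheory

/-- Pochhammer symbol `(a)_n = a (a+1) ⋯ (a+n−1)`. -/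
noncomputable def poch (a : ℂ) (n : ℕ) : ℂ := ∏ i ∈ Finset.range n, (a + i)

/-- Generalized hypergeometric function `ₚF_q(a₁,…,a_p; c₁,…,c_q; x)`. -/
noncomputable def genHyp (as cs : List ℂ) (x : ℂ) : ℂ :=
  ∑' k : ℕ, ((as.map (fun a => poch a k)).prod / (cs.map (fun c => poch c k)).prod)
    * x ^ k / (Nat.factorial k)

/-- Appell's double hypergeometric function `F₃(a,a′,b,b′;c;x,y)`. -/
noncomputable def appellF3 (a a' b b' c x y : ℂ) : ℂ :=
  ∑' mn : ℕ × ℕ, poch a mn.1 * poch a' mn.2 * poch b mn.1 * poch b' mn.2 /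
    (poch c (mn.1 + mn.2) * (Nat.factorial mn.1) * (Nat.factorial mn.2)) * x ^ mn.1 * y ^ mn.2

/-- Generalized binomial coefficient `binom(a,k) = a(a−1)⋯(a−k+1)/k!`. -/
noncomputable def gbinom (a : ℂ) (k : ℕ) : ℂ := (∏ i ∈ Finset.range k, (a - i)) / (Nat.factorial k)

/-- Jacobi type orthogonal polynomial `M_n^{(p,q)}(x)`. -/
noncomputable def jacobiM (n : ℕ) (p q x : ℂ) : ℂ :=
  (-1) ^ n * (Nat.factorial n) * ∑ k ∈ Finset.range (n + 1),
    gbinom (p - n - 1) k * gbinom (q + n) (n - k) * (-x) ^ k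

/-- Left-sided Marichev–Saigo–Maeda fractional integral operator. -/
noncomputable def msmLeft (δ δ' μ μ' ε : ℂ) (f : ℝ → ℂ) (x : ℝ) : ℂ :=
  (x : ℂ) ^ (-δ) / Complex.Gamma ε *
    ∫ t in Set.Ioo (0 : ℝ) x, ((x - t : ℝ) : ℂ) ^ (ε - 1) * (t : ℂ) ^ (-δ') *
      appellF3 δ δ' μ μ' ε ((1 - t / x : ℝ) : ℂ) ((1 - x / t : ℝ) : ℂ) * f t

/-- Right-sided Marichev–Saigo–Maeda fractional integral operator. -/
noncomputable def msmRight (δ δ' μ μ' ε : ℂ) (f : ℝ → ℂ) (x : ℝ) : ℂ :=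
  (x : ℂ) ^ (-δ') / Complex.Gamma ε *
    ∫ t in Set.Ioi x, ((t - x : ℝ) : ℂ) ^ (ε - 1) * (t : ℂ) ^ (-δ) *
      appellF3 δ δ' μ μ' ε ((1 - t / x : ℝ) : ℂ) ((1 - x / t : ℝ) : ℂ) * f t

/-- Left-sided Saigo fractional integral operator. -/
noncomputable def saigoLeft (δ μ ε : ℂ) (f : ℝ → ℂ) (x : ℝ) : ℂ :=
  (x : ℂ) ^ (-δ - μ) / Complex.Gamma δ *
    ∫ t in Set.Ioo (0 : ℝ) x, ((x - t : ℝ) : ℂ) ^ (δ - 1) *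
      genHyp [δ + μ, -ε] [δ] ((1 - t / x : ℝ) : ℂ) * f t

/-- Right-sided Saigo fractional integral operator. -/
noncomputable def saigoRight (δ μ ε : ℂ) (f : ℝ → ℂ) (x : ℝ) : ℂ :=
  (1 / Complex.Gamma δ) *
    ∫ t in Set.Ioi x, ((t - x : ℝ) : ℂ) ^ (δ - 1) * (t : ℂ) ^ (-δ - μ) *
      genHyp [δ + μ, -ε] [δ] ((1 - x / t : ℝ) : ℂ) * f t

/-- Left-sided Riemann–Liouville fractional integral operator. -/
noncomputable def rlLeft (δ : ℂ) (f : ℝ → ℂ) (x : ℝ) : ℂ :=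
  (1 / Complex.Gamma δ) * ∫ t in Set.Ioo (0 : ℝ) x, ((x - t : ℝ) : ℂ) ^ (δ - 1) * f t

/-- Right-sided Riemann–Liouville fractional integral operator. -/
noncomputable def rlRight (δ : ℂ) (f : ℝ → ℂ) (x : ℝ) : ℂ :=
  (1 / Complex.Gamma δ) * ∫ t in Set.Ioi x, ((t - x : ℝ) : ℂ) ^ (δ - 1) * f t

/-- Left-sided Erdélyi–Kober fractional integral operator `I⁺_{ε,δ}`. -/
noncomputable def ekLeft (ε δ : ℂ) (f : ℝ → ℂ) (x : ℝ) : ℂ :=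
  (x : ℂ) ^ (-δ - ε) / Complex.Gamma δ *
    ∫ t in Set.Ioo (0 : ℝ) x, ((x - t : ℝ) : ℂ) ^ (δ - 1) * (t : ℂ) ^ ε * f t

/-- Right-sided Erdélyi–Kober fractional integral operator `K⁻_{ε,δ}`. -/
noncomputable def ekRight (ε δ : ℂ) (f : ℝ → ℂ) (x : ℝ) : ℂ :=
  (x : ℂ) ^ ε / Complex.Gamma δ *
    ∫ t in Set.Ioi x, ((t - x : ℝ) : ℂ) ^ (δ - 1) * (t : ℂ) ^ (-δ - ε) * f t

/-- Left-sided Marichev–Saigo–Maeda fractional derivative operator. -/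
noncomputable def msmDLeft (δ δ' μ μ' ε : ℂ) (f : ℝ → ℂ) (x : ℝ) : ℂ :=
  iteratedDeriv (⌊ε.re⌋ + 1).toNat
    (msmLeft (-δ') (-δ) (-μ' + ((⌊ε.re⌋ + 1 : ℤ) : ℂ)) (-μ) (-ε + ((⌊ε.re⌋ + 1 : ℤ) : ℂ)) f) x

/-- Right-sided Marichev–Saigo–Maeda fractional derivative operator. -/
noncomputable def msmDRight (δ δ' μ μ' ε : ℂ) (f : ℝ → ℂ) (x : ℝ) : ℂ :=
  (-1 : ℂ) ^ (⌊ε.re⌋ + 1).toNat * iteratedDeriv (⌊ε.re⌋ + 1).toNat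
    (msmRight (-δ') (-δ) (-μ') (-μ + ((⌊ε.re⌋ + 1 : ℤ) : ℂ)) (-ε + ((⌊ε.re⌋ + 1 : ℤ) : ℂ)) f) x
section Aux

open Complex MeasureTheory Set

lemma poch_ne_zero {z : ℂ} (hz : 0 < z.re) (k : ℕ) : poch z k ≠ 0 := by
  unfold poch
  refine Finset.prod_ne_zero_iff.mpr fun i _ h => ?_
  have : (z + (i : ℂ)).re = 0 := by rw [h]; simp
  rw [Complex.add_re, Complex.natCast_re] at this
  have hi : (0:ℝ) ≤ (i:ℝ) := Nat.cast_nonneg i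
  linarith

lemma Gamma_poch {z : ℂ} (hz : 0 < z.re) (k : ℕ) :
    Complex.Gamma (z + k) = Complex.Gamma z * poch z k := by
  induction k with
  | zero => simp [poch]
  | succ k ih =>
    have hne : z + (k : ℂ) ≠ 0 := by
      intro h
      have : (z + (k : ℂ)).re = 0 := by rw [h]; simp
      rw [Complex.add_re, Complex.natCast_re] at this
      have hk : (0:ℝ) ≤ (k:ℝ) := Nat.cast_nonneg k
      linarith
    have h1 : (z + ((k+1 : ℕ) : ℂ)) = (z + k) + 1 := by push_cast; ring
    rw [h1, Complex.Gamma_add_one _ hne, ih]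
    unfold poch
    rw [Finset.prod_range_succ]
    ring

lemma poch_add_nat (z : ℂ) (a b : ℕ) :
    poch z (a + b) = poch z a * poch (z + a) b := by
  unfold poch
  rw [Finset.prod_range_add]
  congr 1
  refine Finset.prod_congr rfl fun i _ => ?_
  push_cast; ring

lemma poch_neg_nat_of_lt {n k : ℕ} (h : n < k) : poch (-(n:ℂ)) k = 0 :=
  Finset.prod_eq_zero (Finset.mem_range.mpr h) (by simp)

lemma poch_neg_nat {n k : ℕ} (h : k ≤ n) :
    poch (-(n:ℂ)) k = (-1)^k * (n.factorial : ℂ) / ((n - k).factorial : ℂ) := by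
  have h1 : poch (-(n:ℂ)) k = (-1)^k * ((n.descFactorial k : ℕ) : ℂ) := by
    unfold poch
    rw [Nat.descFactorial_eq_prod_range, Nat.cast_prod]
    rw [show ((-1:ℂ))^k = ∏ _i ∈ Finset.range k, (-1:ℂ) by
      rw [Finset.prod_const, Finset.card_range]]
    rw [← Finset.prod_mul_distrib]
    refine Finset.prod_congr rfl fun i hi => ?_
    have hin : i ≤ n := le_trans (Finset.mem_range.mp hi).le h
    rw [Nat.cast_sub hin]
    ring
  have h2 : ((n - k).factorial : ℂ) * (n.descFactorial k : ℂ) = (n.factorial : ℂ) := by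
    rw [← Nat.cast_mul, Nat.factorial_mul_descFactorial h]
  have h3 : ((n - k).factorial : ℂ) ≠ 0 := Nat.cast_ne_zero.mpr (Nat.factorial_ne_zero _)
  rw [h1, eq_div_iff h3]
  rw [mul_comm ((n-k).factorial : ℂ) _] at h2
  rw [mul_assoc, h2]

lemma gbinom_eq_poch (a : ℂ) (k : ℕ) :
    gbinom a k = (-1)^k * poch (-a) k / (k.factorial : ℂ) := by
  unfold gbinom poch
  congr 1
  rw [show ((-1:ℂ))^k = ∏ _i ∈ Finset.range k, (-1:ℂ) by
    rw [Finset.prod_const, Finset.card_range]]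
  rw [← Finset.prod_mul_distrib]
  refine Finset.prod_congr rfl fun i _ => ?_
  ring

lemma gbinom_shift (qc : ℂ) {n k : ℕ} (h : k ≤ n) :
    gbinom (qc + n) (n - k) = poch (qc + 1 + k) (n - k) / (((n - k).factorial : ℕ) : ℂ) := by
  unfold gbinom poch
  congr 1
  rw [← Finset.prod_range_reflect (fun j => qc + 1 + (k : ℂ) + (j : ℂ)) (n - k)]
  refine Finset.prod_congr rfl fun i hi => ?_
  have hi' : i < n - k := Finset.mem_range.mp hi
  have h1 : (((n - k - 1 - i : ℕ)) : ℂ) = (n : ℂ) - k - 1 - i := by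
    have e : n - k - 1 - i = n - (k + 1 + i) := by omega
    rw [e, Nat.cast_sub (by omega)]
    push_cast; ring
  rw [h1]
  ring

lemma int_beta_integrable {u v : ℂ} (hu : 0 < u.re) (hv : 0 < v.re) {x : ℝ} (hx : 0 < x) :
    IntegrableOn (fun t : ℝ => ((x - t : ℝ) : ℂ) ^ (v - 1) * (t : ℂ) ^ (u - 1))
      (Set.Ioo 0 x) := by
  have B := (Complex.betaIntegral_convergent hu hv).comp_mul_left (c := x⁻¹)
  rw [zero_div, one_div, inv_inv] at B
  have B2 := B.const_mul ((x:ℂ)^(u-1) * (x:ℂ)^(v-1))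
  rw [intervalIntegrable_iff, Set.uIoc_of_le hx.le] at B2
  refine (B2.mono_set Set.Ioo_subset_Ioc_self).congr_fun ?_ measurableSet_Ioo
  intro t ht
  obtain ⟨ht0, htx⟩ := ht
  have h1mt : (0:ℝ) ≤ 1 - x⁻¹ * t := by
    rw [sub_nonneg, inv_mul_eq_div, div_le_one hx]
    exact htx.le
  show (x:ℂ)^(u-1) * (x:ℂ)^(v-1) *
      (((x⁻¹ * t : ℝ) : ℂ) ^ (u - 1) * (1 - ((x⁻¹ * t : ℝ) : ℂ)) ^ (v - 1))
    = ((x - t : ℝ) : ℂ) ^ (v - 1) * (t : ℂ) ^ (u - 1)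
  rw [show (1 - ((x⁻¹ * t : ℝ) : ℂ)) = ((1 - x⁻¹ * t : ℝ) : ℂ) by push_cast; ring]
  rw [mul_mul_mul_comm, ← Complex.mul_cpow_ofReal_nonneg hx.le (by positivity),
    ← Complex.mul_cpow_ofReal_nonneg hx.le h1mt]
  have hxc : ((x:ℝ):ℂ) ≠ 0 := Complex.ofReal_ne_zero.mpr hx.ne'
  rw [show ((x:ℝ):ℂ) * ((x⁻¹ * t : ℝ) : ℂ) = ((t:ℝ):ℂ) by
      push_cast; field_simp,
    show ((x:ℝ):ℂ) * ((1 - x⁻¹ * t : ℝ) : ℂ) = ((x - t : ℝ) : ℂ) by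
      push_cast; field_simp]
  ring

lemma int_beta {u v : ℂ} (hu : 0 < u.re) (hv : 0 < v.re) {x : ℝ} (hx : 0 < x) :
    ∫ t in Set.Ioo (0:ℝ) x, ((x - t : ℝ) : ℂ) ^ (v - 1) * (t : ℂ) ^ (u - 1)
      = (x:ℂ) ^ (u + v - 1) *
        (Complex.Gamma u * Complex.Gamma v / Complex.Gamma (u + v)) := by
  have h1 : ∀ t : ℝ, ((x - t : ℝ) : ℂ) ^ (v - 1) * (t : ℂ) ^ (u - 1)
      = (t : ℂ) ^ (u - 1) * ((x : ℂ) - (t : ℂ)) ^ (v - 1) := by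
    intro t; push_cast; ring
  simp_rw [h1]
  rw [← MeasureTheory.integral_Ioc_eq_integral_Ioo, ← intervalIntegral.integral_of_le hx.le,
    Complex.betaIntegral_scaled u v hx]
  congr 1
  have hΓ : Complex.Gamma (u + v) ≠ 0 :=
    Complex.Gamma_ne_zero_of_re_pos (by rw [Complex.add_re]; linarith)
  rw [eq_div_iff hΓ]
  linear_combination (Complex.Gamma_mul_Gamma_eq_betaIntegral hu hv).symm

end Aux

/-- Corollary 3: Erdélyi–Kober left-sided fractional integral of the Jacobi type
polynomial. -/
theorem ekLeft_jacobiM (n : ℕ) (p q : ℝ) (hq : -1 < q) (δ ε τ : ℂ)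
    (hδ : 0 < δ.re) (hτ : 0 < (τ + ε).re) (x : ℝ) (hx : 0 < x) :
    ekLeft ε δ (fun t => (t : ℂ) ^ (τ - 1) * jacobiM n p q t) x =
      (-1) ^ n * Complex.Gamma (1 + (q : ℂ) + n) * Complex.Gamma (τ + ε) /
        (Complex.Gamma (1 + (q : ℂ)) * Complex.Gamma (τ + δ + ε)) *
        (x : ℂ) ^ (τ - 1) *
        genHyp [1 + (n : ℂ) - p, -(n : ℂ), τ + ε]
          [1 + (q : ℂ), τ + δ + ε] (-(x : ℂ)) := by
  have hxc : ((x:ℝ):ℂ) ≠ 0 := Complex.ofReal_ne_zero.mpr hx.ne'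
  have hτδε : 0 < (τ + δ + ε).re := by
    have h1 : (τ + δ + ε).re = (τ + ε).re + δ.re := by
      simp [Complex.add_re]; ring
    rw [h1]; linarith
  have h1q : 0 < (1 + (q:ℂ)).re := by
    simp [Complex.add_re]; linarith
  have hΓδ : Complex.Gamma δ ≠ 0 := Complex.Gamma_ne_zero_of_re_pos hδ
  have hΓτδε : Complex.Gamma (τ + δ + ε) ≠ 0 := Complex.Gamma_ne_zero_of_re_pos hτδε
  have hΓ1q : Complex.Gamma (1 + (q:ℂ)) ≠ 0 := Complex.Gamma_ne_zero_of_re_pos h1q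
  -- RHS as a finite sum
  have hgen : genHyp [1 + (n : ℂ) - p, -(n : ℂ), τ + ε] [1 + (q : ℂ), τ + δ + ε] (-(x : ℂ))
      = ∑ k ∈ Finset.range (n + 1),
          poch (1 + (n : ℂ) - p) k * poch (-(n : ℂ)) k * poch (τ + ε) k /
            (poch (1 + (q : ℂ)) k * poch (τ + δ + ε) k) * (-(x:ℂ)) ^ k /
            (k.factorial : ℂ) := by
    unfold genHyp
    rw [tsum_eq_sum (s := Finset.range (n + 1)) ?_]
    · refine Finset.sum_congr rfl fun k _ => ?_
      simp only [List.map_cons, List.map_nil, List.prod_cons, List.prod_nil, mul_one]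
      ring_nf
    · intro k hk
      have hnk : n < k := by
        by_contra h
        exact hk (Finset.mem_range.mpr (by omega))
      simp only [List.map_cons, List.map_nil, List.prod_cons, List.prod_nil, mul_one]
      rw [poch_neg_nat_of_lt hnk]
      simp
  -- integrand congruence
  set c : ℕ → ℂ := fun k =>
    (-1) ^ n * (n.factorial : ℂ) *
      (gbinom ((p:ℂ) - n - 1) k * gbinom ((q:ℂ) + n) (n - k)) * (-1) ^ k with hc
  have hcong : ∀ t ∈ Set.Ioo (0:ℝ) x,
      ((x - t : ℝ) : ℂ) ^ (δ - 1) * (t : ℂ) ^ ε * ((t : ℂ) ^ (τ - 1) * jacobiM n p q t)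
      = ∑ k ∈ Finset.range (n + 1),
          c k * (((x - t : ℝ) : ℂ) ^ (δ - 1) * (t : ℂ) ^ (τ + ε + k - 1)) := by
    intro t ht
    have ht0 : ((t:ℝ):ℂ) ≠ 0 := Complex.ofReal_ne_zero.mpr ht.1.ne'
    simp only [jacobiM, Finset.mul_sum]
    refine Finset.sum_congr rfl fun k _ => ?_
    have hpow : ((t:ℝ):ℂ) ^ (τ + ε + (k:ℂ) - 1)
        = (t:ℂ) ^ ε * (t:ℂ) ^ (τ - 1) * (t:ℂ) ^ (k:ℕ) := by
      rw [← Complex.cpow_natCast, ← Complex.cpow_add _ _ ht0, ← Complex.cpow_add _ _ ht0]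
      congr 1; ring
    have hneg : (-(t:ℂ)) ^ k = (-1:ℂ) ^ k * (t:ℂ) ^ k := by
      rw [neg_pow]
    rw [hc]
    simp only []
    rw [hpow, hneg]
    ring
  unfold ekLeft
  rw [MeasureTheory.setIntegral_congr_fun measurableSet_Ioo hcong,
    MeasureTheory.integral_finset_sum _ (fun k _ => by
      have hu : 0 < (τ + ε + (k:ℂ)).re := by
        have : (τ + ε + (k:ℂ)).re = (τ + ε).re + k := by
          simp [Complex.add_re]
        rw [this]; positivity
      exact ((int_beta_integrable hu hδ hx).const_mul (c k)))]
  have hval : ∀ k ∈ Finset.range (n+1),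
      ∫ t in Set.Ioo (0:ℝ) x, c k * (((x - t : ℝ) : ℂ) ^ (δ - 1) * (t : ℂ) ^ (τ + ε + k - 1))
      = c k * ((x:ℂ) ^ (τ + ε + (k:ℂ) + δ - 1) *
          (Complex.Gamma (τ + ε + k) * Complex.Gamma δ / Complex.Gamma (τ + ε + (k:ℂ) + δ))) := by
    intro k _
    rw [MeasureTheory.integral_const_mul]
    congr 1
    have hu : 0 < (τ + ε + (k:ℂ)).re := by
      have : (τ + ε + (k:ℂ)).re = (τ + ε).re + k := by simp [Complex.add_re]
      rw [this]; positivity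
    exact int_beta hu hδ hx
  rw [Finset.sum_congr rfl hval, hgen, Finset.mul_sum, Finset.mul_sum]
  refine Finset.sum_congr rfl fun k hk => ?_
  have hkn : k ≤ n := by
    have := Finset.mem_range.mp hk; omega
  -- per-term identity
  have hx1 : ((x:ℝ):ℂ) ^ (-δ - ε) * (x:ℂ) ^ (τ + ε + (k:ℂ) + δ - 1)
      = (x:ℂ) ^ (τ - 1) * (x:ℂ) ^ (k:ℕ) := by
    rw [← Complex.cpow_natCast, ← Complex.cpow_add _ _ hxc, ← Complex.cpow_add _ _ hxc]
    congr 1; ring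
  have hG1 : Complex.Gamma (τ + ε + (k:ℂ)) = Complex.Gamma (τ + ε) * poch (τ + ε) k :=
    Gamma_poch hτ k
  have hG2 : Complex.Gamma (τ + ε + (k:ℂ) + δ)
      = Complex.Gamma (τ + δ + ε) * poch (τ + δ + ε) k := by
    rw [show τ + ε + (k:ℂ) + δ = (τ + δ + ε) + (k:ℂ) by ring]
    exact Gamma_poch hτδε k
  have hG3 : Complex.Gamma (1 + (q:ℂ) + n)
      = Complex.Gamma (1 + (q:ℂ)) * (poch (1 + (q:ℂ)) k * poch (1 + (q:ℂ) + k) (n - k)) := by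
    rw [Gamma_poch h1q n, ← poch_add_nat, Nat.add_sub_cancel' hkn]
  have hgb1 : gbinom ((p:ℂ) - n - 1) k
      = (-1:ℂ)^k * poch (1 + (n:ℂ) - p) k / (k.factorial : ℂ) := by
    rw [gbinom_eq_poch, show -((p:ℂ) - n - 1) = 1 + (n:ℂ) - p by ring]
  have hgb2 : gbinom ((q:ℂ) + n) (n - k)
      = poch (1 + (q:ℂ) + k) (n - k) / (((n - k).factorial : ℕ) : ℂ) := by
    rw [gbinom_shift (q:ℂ) hkn, show (q:ℂ) + 1 + k = 1 + (q:ℂ) + k by ring]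
  have hpn : poch (-(n:ℂ)) k = (-1)^k * (n.factorial : ℂ) / ((n - k).factorial : ℂ) :=
    poch_neg_nat hkn
  have hnegx : (-(x:ℂ)) ^ k = (-1:ℂ)^k * (x:ℂ)^k := by rw [neg_pow]
  have hp1 : poch (τ + δ + ε) k ≠ 0 := poch_ne_zero hτδε k
  have hp2 : poch (1 + (q:ℂ)) k ≠ 0 := poch_ne_zero h1q k
  have hf1 : (k.factorial : ℂ) ≠ 0 := Nat.cast_ne_zero.mpr (Nat.factorial_ne_zero _)
  have hf2 : (((n - k).factorial : ℕ) : ℂ) ≠ 0 := Nat.cast_ne_zero.mpr (Nat.factorial_ne_zero _)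
  have hz1 : ((x:ℝ):ℂ) ^ (τ + ε + (k:ℂ) + δ - 1) ≠ 0 := by
    simp [Complex.cpow_eq_zero_iff, hxc]
  have hx2 : ((x:ℝ):ℂ) ^ (-δ - ε)
      = (x:ℂ) ^ (τ - 1) * (x:ℂ) ^ (k:ℕ) / (x:ℂ) ^ (τ + ε + (k:ℂ) + δ - 1) := by
    rw [eq_div_iff hz1]; exact hx1
  rw [hc]
  simp only []
  rw [hG1, hG2, hG3, hgb1, hgb2, hpn, hnegx, hx2]
  simp only [mul_div_assoc', div_div, div_mul_eq_mul_div]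
  rw [div_eq_div_iff
    (by simp [hΓδ, hΓτδε, hΓ1q, hp1, hp2, hf1, hf2, hz1])
    (by simp [hΓδ, hΓτδε, hΓ1q, hp1, hp2, hf1, hf2, hz1])]
  ring
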